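/- Let α be a positive integer, D ≥ 0 a real, and d_1,...,d_α, p_1,...,p_α nonnegative reals such that for every j ∈ [α]: d_j ≥ (D - sum_{k<j} d_k - sum_{k<j} p_k)/(4α) and p_j ≤ d_j/2. Then sum_{j=1}^α d_j ≥ 2D/11. -/

import Mathlib

/-- If each d_j ≥ (D - ∑_{k<j} d_k - ∑_{k<j} p_k)/(4α) and p_j ≤ d_j/2,
then ∑_j d_j ≥ 2D/11. -/
theorem recursive_sum_lower_with_losses (α : ℕ) (hα : 0 < α) (D : ℝ) (hD : 0 ≤ D)
    (d p : ℕ → ℝ)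
    (hd : ∀ j ∈ Finset.range α, 0 ≤ d j)
    (hp : ∀ j ∈ Finset.range α, 0 ≤ p j)
    (hph : ∀ j ∈ Finset.range α, p j ≤ d j / 2)
    (hrec : ∀ j ∈ Finset.range α,
      (D - ∑ k ∈ Finset.range j, d k - ∑ k ∈ Finset.range j, p k) / (4 * α) ≤ d j) :
    2 * D / 11 ≤ ∑ j ∈ Finset.range α, d j := by
  have hA : (0:ℝ) < α := by exact_mod_cast hα
  have hA1 : (1:ℝ) ≤ α := by exact_mod_cast hα
  set c : ℝ := 3 / (8 * α) with hc
  have hc0 : 0 < c := by positivity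
  have hc1 : (0:ℝ) ≤ 1 - c := by
    rw [sub_nonneg, hc, div_le_one (by positivity)]
    nlinarith
  have key : ∀ j ≤ α, D - (3/2) * ∑ k ∈ Finset.range j, d k ≤ D * (1 - c)^j := by
    intro j hj
    induction j with
    | zero => simp
    | succ n ih =>
      have hnα : n < α := hj
      have ih' := ih (Nat.le_of_lt hnα)
      have hPS : ∑ k ∈ Finset.range n, p k ≤ (∑ k ∈ Finset.range n, d k) / 2 := by
        rw [Finset.sum_div]
        refine Finset.sum_le_sum fun k hk => ?_
        exact hph k (Finset.mem_range.mpr ((Finset.mem_range.mp hk).trans hnα))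
      have hdn := hrec n (Finset.mem_range.mpr hnα)
      have hdn0 := hd n (Finset.mem_range.mpr hnα)
      rw [Finset.sum_range_succ]
      set S := ∑ k ∈ Finset.range n, d k
      have hR : D - S - ∑ k ∈ Finset.range n, p k ≤ 4 * α * d n := by
        rw [div_le_iff₀ (by positivity)] at hdn
        linarith [hdn]
      rcases le_or_gt (D - (3/2) * S) 0 with h0 | h0
      · have : D * (1 - c)^(n+1) ≥ 0 := by positivity
        nlinarith
      · have hd2 : (D - (3/2) * S) / (4 * α) ≤ d n := by
          rw [div_le_iff₀ (by positivity)]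
          nlinarith
        have step : (D - (3/2) * S) * (1 - c) ≤ D * (1 - c)^n * (1 - c) :=
          mul_le_mul_of_nonneg_right ih' hc1
        have : D - (3/2) * S - (3/2) * d n ≤ (D - (3/2) * S) * (1 - c) := by
          rw [div_le_iff₀ (by positivity)] at hd2
          have h4 : c * (4 * (α:ℝ)) = 3/2 := by
            rw [hc]; field_simp; ring
          nlinarith
        calc D - (3/2) * (S + d n) = D - (3/2) * S - (3/2) * d n := by ring
          _ ≤ (D - (3/2) * S) * (1 - c) := this
          _ ≤ D * (1 - c)^n * (1 - c) := step
          _ = D * (1 - c)^(n+1) := by ring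
  have hmain := key α le_rfl
  -- (1 - c)^α ≤ exp(-3/8) ≤ 8/11
  have hexp1 : 1 - c ≤ Real.exp (-c) := by
    have := Real.add_one_le_exp (-c); linarith
  have hpow : (1 - c)^α ≤ Real.exp (-c) ^ α :=
    pow_le_pow_left₀ hc1 hexp1 α
  have hexp2 : Real.exp (-c) ^ α = Real.exp (-(3/8)) := by
    rw [← Real.exp_nat_mul]
    congr 1
    rw [hc]; field_simp
  have hexp3 : Real.exp (-(3/8)) ≤ 8/11 := by
    rw [Real.exp_neg]
    rw [inv_le_comm₀ (Real.exp_pos _) (by norm_num)]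
    have := Real.add_one_le_exp (3/8 : ℝ)
    linarith
  have hfin : (1 - c)^α ≤ 8/11 := by
    calc (1 - c)^α ≤ Real.exp (-c) ^ α := hpow
      _ = Real.exp (-(3/8)) := hexp2
      _ ≤ 8/11 := hexp3
  have : D * (1 - c)^α ≤ D * (8/11) := mul_le_mul_of_nonneg_left hfin hD
  linarith
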